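/- Let A : V → V be linear with I - A invertible, b ∈ V, Φ̄ the fixed point of x ↦ A x - b. Given Φ^0, set ΔΦ^0 = AΦ^0 - b - Φ^0, ΔΦ^1 = A ΔΦ^0, τ ∈ ℝ with τ ≠ 1, and ΔΨ^0 = ΔΦ^1 - τ ΔΦ^0. Then Φ̄ = Φ^0 + (1/(1-τ)) ΔΦ^0 + ((1/(1-τ)) (I - A)⁻¹) ΔΨ^0. -/

import Mathlib

theorem fixpoint_decomposition
    (N : ℕ) (A B : Module.End ℝ (Fin N → ℝ))
    (hB1 : (1 - A) * B = 1) (hB2 : B * (1 - A) = 1)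
    (b : Fin N → ℝ)
    (Φbar : Fin N → ℝ) (hbar : Φbar = A Φbar - b)
    (Φ0 : Fin N → ℝ)
    (ΔΦ0 : Fin N → ℝ) (h0 : ΔΦ0 = A Φ0 - b - Φ0)
    (ΔΦ1 : Fin N → ℝ) (h1 : ΔΦ1 = A ΔΦ0)
    (τ : ℝ) (hτ : τ ≠ 1)
    (ΔΨ0 : Fin N → ℝ) (hΨ : ΔΨ0 = ΔΦ1 - τ • ΔΦ0) :
    Φbar = Φ0 + (1 / (1 - τ)) • ΔΦ0 + (1 / (1 - τ)) • B ΔΨ0 := by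
  have hc : (1 : ℝ) - τ ≠ 0 := sub_ne_zero.mpr (Ne.symm hτ)
  have hBx : ∀ x, B (x - A x) = x := by
    intro x
    have h := LinearMap.congr_fun hB2 x
    simpa [Module.End.mul_apply, LinearMap.sub_apply] using h
  have hb' : A Φbar = Φbar + b := (eq_sub_iff_add_eq.mp hbar).symm
  have e : (Φbar - Φ0) - A (Φbar - Φ0) = ΔΦ0 := by
    rw [map_sub, hb', h0]; abel
  have h2 : Φbar = Φ0 + B ΔΦ0 := by
    rw [← e, hBx]; abel
  have hBA : B (A ΔΦ0) = B ΔΦ0 - ΔΦ0 := by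
    have h := hBx ΔΦ0
    rw [map_sub] at h
    rw [eq_sub_iff_add_eq, ← eq_sub_iff_add_eq']
    exact h.symm
  rw [h2, hΨ, h1, map_sub, map_smul, hBA]
  match_scalars <;> field_simp <;> ring
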